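/- arXiv:2308.04259 — 4 statements merged into one kernel-verified Lean document; each statement's English description precedes it below -/
import Mathlib

section
/- For each k ≥ 0 the GF-RLS cost J_k(θ̂) = Σ_{i=0}^k ‖y_i − φ_i θ̂‖²_{Γ_i⁻¹} − Σ_{i=0}^k ‖θ̂ − θ_i‖²_{F_i} + ‖θ̂ − θ_0‖²_{P_0⁻¹} has a unique global minimizer θ_{k+1}, which satisfies the recursions P_{k+1}⁻¹ = P_k⁻¹ − F_k + φ_kᵀΓ_k⁻¹φ_k and θ_{k+1} = θ_k + P_{k+1}φ_kᵀΓ_k⁻¹(y_k − φ_kθ_k). -/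
open Matrix

namespace GFRLSAux

lemma dot_trans {m l : ℕ} (B : Matrix (Fin m) (Fin l) ℝ) (a : Fin m → ℝ) (c : Fin l → ℝ) :
    a ⬝ᵥ B *ᵥ c = c ⬝ᵥ Bᵀ *ᵥ a := by
  rw [dotProduct_mulVec c, vecMul_transpose, dotProduct_comm]

lemma dot_symm {m : ℕ} (M : Matrix (Fin m) (Fin m) ℝ) (hM : Mᵀ = M)
    (a x : Fin m → ℝ) : a ⬝ᵥ M *ᵥ x = x ⬝ᵥ M *ᵥ a := by
  rw [dot_trans, hM]

lemma expand_sub {m : ℕ} (M : Matrix (Fin m) (Fin m) ℝ) (hM : Mᵀ = M)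
    (a x : Fin m → ℝ) :
    (x - a) ⬝ᵥ M *ᵥ (x - a)
      = x ⬝ᵥ M *ᵥ x - 2 * (x ⬝ᵥ M *ᵥ a) + a ⬝ᵥ M *ᵥ a := by
  rw [mulVec_sub, dotProduct_sub, sub_dotProduct, sub_dotProduct,
    dot_symm M hM a x]
  ring

lemma expand_res {p n : ℕ} (N : Matrix (Fin p) (Fin p) ℝ) (hN : Nᵀ = N)
    (A : Matrix (Fin p) (Fin n) ℝ) (y : Fin p → ℝ) (x : Fin n → ℝ) :
    (y - A *ᵥ x) ⬝ᵥ N *ᵥ (y - A *ᵥ x)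
      = y ⬝ᵥ N *ᵥ y - 2 * (x ⬝ᵥ (Aᵀ * N) *ᵥ y) + x ⬝ᵥ (Aᵀ * N * A) *ᵥ x := by
  rw [expand_sub N hN (A *ᵥ x) y]
  have h1 : y ⬝ᵥ N *ᵥ (A *ᵥ x) = x ⬝ᵥ (Aᵀ * N) *ᵥ y := by
    rw [mulVec_mulVec, dot_trans, transpose_mul, hN]
  have h2 : (A *ᵥ x) ⬝ᵥ N *ᵥ (A *ᵥ x) = x ⬝ᵥ (Aᵀ * N * A) *ᵥ x := by
    rw [mulVec_mulVec, dot_trans, transpose_mul, hN, mulVec_mulVec]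
  rw [h1, h2]

lemma sum_mulVec {m : ℕ} {ι : Type*} (s : Finset ι) (M : ι → Matrix (Fin m) (Fin m) ℝ)
    (v : Fin m → ℝ) : (∑ i ∈ s, M i) *ᵥ v = ∑ i ∈ s, M i *ᵥ v := by
  induction s using Finset.cons_induction with
  | empty => simp [Matrix.zero_mulVec]
  | cons a s ha ih => simp [Matrix.add_mulVec, ih]

lemma dot_sum {m : ℕ} {ι : Type*} (s : Finset ι) (v : Fin m → ℝ) (f : ι → Fin m → ℝ) :
    v ⬝ᵥ ∑ i ∈ s, f i = ∑ i ∈ s, v ⬝ᵥ f i := by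
  induction s using Finset.cons_induction with
  | empty => simp
  | cons a s ha ih => simp [dotProduct_add, ih]

lemma herm_symm {m : ℕ} {M : Matrix (Fin m) (Fin m) ℝ} (h : M.IsHermitian) : Mᵀ = M := by
  simpa using h.eq

end GFRLSAux

open GFRLSAux

/-- the GF-RLS cost has a unique global minimizer at each step, and the
sequence of minimizers satisfies the GF-RLS recursions. -/
theorem gfrls_cost_unique_minimizer (n p : ℕ)
    (Γ : ℕ → Matrix (Fin p) (Fin p) ℝ) (hΓ : ∀ k, (Γ k).PosDef)
    (φ : ℕ → Matrix (Fin p) (Fin n) ℝ) (y : ℕ → Fin p → ℝ)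
    (P0 : Matrix (Fin n) (Fin n) ℝ) (hP0 : P0.PosDef) (θ0 : Fin n → ℝ)
    (F : ℕ → Matrix (Fin n) (Fin n) ℝ) (hFsymm : ∀ k, (F k).IsSymm)
    (hFlt : ∀ k, ((P0⁻¹ + ∑ i ∈ Finset.range k, (-(F i) + (φ i)ᵀ * (Γ i)⁻¹ * φ i))
        - F k).PosDef) :
    ∃ (θ : ℕ → Fin n → ℝ) (P : ℕ → Matrix (Fin n) (Fin n) ℝ),
      θ 0 = θ0 ∧ P 0 = P0 ∧
      ∀ k : ℕ,
        (P (k + 1))⁻¹ = (P k)⁻¹ - F k + (φ k)ᵀ * (Γ k)⁻¹ * φ k ∧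
        θ (k + 1) = θ k + (P (k + 1) * (φ k)ᵀ * (Γ k)⁻¹).mulVec (y k - (φ k).mulVec (θ k)) ∧
        (∀ x : Fin n → ℝ, x ≠ θ (k + 1) →
          ((∑ i ∈ Finset.range (k + 1),
              (y i - (φ i).mulVec (θ (k + 1))) ⬝ᵥ
                ((Γ i)⁻¹).mulVec (y i - (φ i).mulVec (θ (k + 1))))
            - (∑ i ∈ Finset.range (k + 1),
              (θ (k + 1) - θ i) ⬝ᵥ (F i).mulVec (θ (k + 1) - θ i))
            + (θ (k + 1) - θ0) ⬝ᵥ (P0⁻¹).mulVec (θ (k + 1) - θ0))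
          <
          ((∑ i ∈ Finset.range (k + 1),
              (y i - (φ i).mulVec x) ⬝ᵥ ((Γ i)⁻¹).mulVec (y i - (φ i).mulVec x))
            - (∑ i ∈ Finset.range (k + 1), (x - θ i) ⬝ᵥ (F i).mulVec (x - θ i))
            + (x - θ0) ⬝ᵥ (P0⁻¹).mulVec (x - θ0))) := by
  classical
  set A : ℕ → Matrix (Fin n) (Fin n) ℝ :=
    fun k => P0⁻¹ + ∑ i ∈ Finset.range k, (-(F i) + (φ i)ᵀ * (Γ i)⁻¹ * φ i) with hA
  have hA0 : A 0 = P0⁻¹ := by simp [hA]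
  have hAsucc : ∀ k, A (k + 1) = (A k - F k) + (φ k)ᵀ * (Γ k)⁻¹ * φ k := by
    intro k
    simp only [hA, Finset.sum_range_succ]
    abel
  have hGi : ∀ k, ((φ k)ᵀ * (Γ k)⁻¹ * φ k).PosSemidef := by
    intro k
    have h := ((hΓ k).inv.posSemidef).conjTranspose_mul_mul_same (φ k)
    simpa using h
  have hFlt' : ∀ k, (A k - F k).PosDef := by
    intro k
    simpa only [hA] using hFlt k
  have hApos : ∀ k, (A k).PosDef := by
    intro k
    induction k with
    | zero => rw [hA0]; exact hP0.inv
    | succ k ih =>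
      rw [hAsucc]
      exact (hFlt' k).add_posSemidef (hGi k)
  have hdet : ∀ k, IsUnit (A k).det := fun k => (hApos k).det_pos.ne'.isUnit
  have hPinv : ∀ k, ((A k)⁻¹)⁻¹ = A k := fun k => Matrix.nonsing_inv_nonsing_inv _ (hdet k)
  set θ : ℕ → Fin n → ℝ := fun k =>
    Nat.rec θ0 (fun k θk =>
      θk + ((A (k + 1))⁻¹ * (φ k)ᵀ * (Γ k)⁻¹) *ᵥ (y k - (φ k) *ᵥ θk)) k with hθ
  have hθ0 : θ 0 = θ0 := rfl
  have hθs : ∀ k, θ (k + 1)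
      = θ k + ((A (k + 1))⁻¹ * (φ k)ᵀ * (Γ k)⁻¹) *ᵥ (y k - (φ k) *ᵥ θ k) := fun k => rfl
  set b : ℕ → Fin n → ℝ := fun k =>
    P0⁻¹ *ᵥ θ0 + ∑ i ∈ Finset.range k, (((φ i)ᵀ * (Γ i)⁻¹) *ᵥ y i - (F i) *ᵥ θ i) with hbdef
  have hb : ∀ k, A k *ᵥ θ k = b k := by
    intro k
    induction k with
    | zero => simp [hA0, hbdef, hθ0]
    | succ k ih =>
      have hmul : A (k + 1) * ((A (k + 1))⁻¹ * (φ k)ᵀ * (Γ k)⁻¹) = (φ k)ᵀ * (Γ k)⁻¹ := by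
        rw [← Matrix.mul_assoc, ← Matrix.mul_assoc,
          Matrix.mul_nonsing_inv _ (hdet (k + 1)), Matrix.one_mul]
      have hb1 : b (k + 1) = b k + (((φ k)ᵀ * (Γ k)⁻¹) *ᵥ y k - (F k) *ᵥ θ k) := by
        simp only [hbdef, Finset.sum_range_succ]
        abel
      rw [hθs k, mulVec_add, mulVec_mulVec, hmul, hb1, ← ih]
      rw [hAsucc k, Matrix.add_mulVec, Matrix.sub_mulVec, mulVec_sub, mulVec_mulVec]
      abel
  -- symmetry facts
  have hΓsymm : ∀ i, ((Γ i)⁻¹)ᵀ = (Γ i)⁻¹ := fun i => herm_symm (hΓ i).inv.isHermitian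
  have hP0symm : (P0⁻¹)ᵀ = P0⁻¹ := herm_symm hP0.inv.isHermitian
  have hAsymm : ∀ k, (A k)ᵀ = A k := fun k => herm_symm (hApos k).isHermitian
  refine ⟨θ, fun k => (A k)⁻¹, hθ0,
    by show (A 0)⁻¹ = P0; rw [hA0]
       exact Matrix.nonsing_inv_nonsing_inv _ hP0.det_pos.ne'.isUnit, ?_⟩
  intro k
  refine ⟨?_, hθs k, ?_⟩
  · show ((A (k + 1))⁻¹)⁻¹ = ((A k)⁻¹)⁻¹ - F k + (φ k)ᵀ * (Γ k)⁻¹ * φ k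
    rw [hPinv (k + 1), hPinv k, hAsucc k]
  · -- the minimization claim
    intro x hx
    set C : ℝ := (∑ i ∈ Finset.range (k + 1), y i ⬝ᵥ (Γ i)⁻¹ *ᵥ y i)
      - (∑ i ∈ Finset.range (k + 1), θ i ⬝ᵥ (F i) *ᵥ θ i)
      + θ0 ⬝ᵥ P0⁻¹ *ᵥ θ0 with hC
    have hJ : ∀ z : Fin n → ℝ,
        ((∑ i ∈ Finset.range (k + 1),
            (y i - (φ i) *ᵥ z) ⬝ᵥ (Γ i)⁻¹ *ᵥ (y i - (φ i) *ᵥ z))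
          - (∑ i ∈ Finset.range (k + 1), (z - θ i) ⬝ᵥ (F i) *ᵥ (z - θ i))
          + (z - θ0) ⬝ᵥ P0⁻¹ *ᵥ (z - θ0))
        = z ⬝ᵥ A (k + 1) *ᵥ z - 2 * (z ⬝ᵥ b (k + 1)) + C := by
      intro z
      have e1 : ∀ i ∈ Finset.range (k + 1),
          (y i - (φ i) *ᵥ z) ⬝ᵥ (Γ i)⁻¹ *ᵥ (y i - (φ i) *ᵥ z)
            = y i ⬝ᵥ (Γ i)⁻¹ *ᵥ y i - 2 * (z ⬝ᵥ ((φ i)ᵀ * (Γ i)⁻¹) *ᵥ y i)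
              + z ⬝ᵥ ((φ i)ᵀ * (Γ i)⁻¹ * φ i) *ᵥ z :=
        fun i _ => expand_res ((Γ i)⁻¹) (hΓsymm i) (φ i) (y i) z
      have e2 : ∀ i ∈ Finset.range (k + 1),
          (z - θ i) ⬝ᵥ (F i) *ᵥ (z - θ i)
            = z ⬝ᵥ (F i) *ᵥ z - 2 * (z ⬝ᵥ (F i) *ᵥ θ i) + θ i ⬝ᵥ (F i) *ᵥ θ i :=
        fun i _ => expand_sub (F i) (hFsymm i) (θ i) z
      have e3 : (z - θ0) ⬝ᵥ P0⁻¹ *ᵥ (z - θ0)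
          = z ⬝ᵥ P0⁻¹ *ᵥ z - 2 * (z ⬝ᵥ P0⁻¹ *ᵥ θ0) + θ0 ⬝ᵥ P0⁻¹ *ᵥ θ0 :=
        expand_sub P0⁻¹ hP0symm θ0 z
      have eA : z ⬝ᵥ A (k + 1) *ᵥ z
          = z ⬝ᵥ P0⁻¹ *ᵥ z + ∑ i ∈ Finset.range (k + 1),
              (z ⬝ᵥ ((φ i)ᵀ * (Γ i)⁻¹ * φ i) *ᵥ z - z ⬝ᵥ (F i) *ᵥ z) := by
        rw [hA]
        simp only [Matrix.add_mulVec, dotProduct_add, sum_mulVec, dot_sum,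
          Matrix.add_mulVec, Matrix.neg_mulVec, dotProduct_add, dotProduct_neg]
        congr 1
        exact Finset.sum_congr rfl fun i _ => by ring
      have eb : z ⬝ᵥ b (k + 1)
          = z ⬝ᵥ P0⁻¹ *ᵥ θ0 + ∑ i ∈ Finset.range (k + 1),
              (z ⬝ᵥ ((φ i)ᵀ * (Γ i)⁻¹) *ᵥ y i - z ⬝ᵥ (F i) *ᵥ θ i) := by
        rw [hbdef]
        simp only [dotProduct_add, dot_sum, dotProduct_sub]
      rw [Finset.sum_congr rfl e1, Finset.sum_congr rfl e2, e3, eA, eb, hC]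
      simp only [Finset.sum_add_distrib, Finset.sum_sub_distrib, ← Finset.mul_sum]
      ring
    have hbs : b (k + 1) = A (k + 1) *ᵥ θ (k + 1) := (hb (k + 1)).symm
    have hne : x - θ (k + 1) ≠ 0 := sub_ne_zero.mpr hx
    have hpos : 0 < (x - θ (k + 1)) ⬝ᵥ A (k + 1) *ᵥ (x - θ (k + 1)) := by
      have := (hApos (k + 1)).dotProduct_mulVec_pos hne
      simpa using this
    rw [expand_sub (A (k + 1)) (hAsymm (k + 1)) (θ (k + 1)) x] at hpos
    have hds := dot_symm (A (k + 1)) (hAsymm (k + 1)) (θ (k + 1)) x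
    rw [hJ x, hJ (θ (k + 1)), hbs]
    linarith [hpos]
end

section
/- With M_k := I_n − P_{k+1}φ̄_kᵀφ̄_k and ΔV_k := −M_kᵀP_{k+1}⁻¹M_k + P_k⁻¹, where P_{k+1}⁻¹ = P_k⁻¹ − F_k + φ̄_kᵀφ̄_k and P_k⁻¹ − F_k ≻ 0, one has ΔV_k = F_k + φ̄_kᵀG_k⁻¹φ̄_k where G_k := I_p + φ̄_k(P_k⁻¹ − F_k)⁻¹φ̄_kᵀ; consequently ΔV_k ⪰ F_k + φ̄_kᵀφ̄_k / (1 + λ_max(φ̄_kφ̄_kᵀ)·λ_max((P_k⁻¹ − F_k)⁻¹)). -/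
open Matrix


-- aux 1: smul psd
lemma psd_smul {m : Type*} [Fintype m] {M : Matrix m m ℝ} (hM : M.PosSemidef)
    {a : ℝ} (ha : 0 ≤ a) : (a • M).PosSemidef := by
  constructor
  · unfold Matrix.IsHermitian at *
    rw [conjTranspose_smul, hM.1]
    simp
  · exact (hM.smul ha).2

-- aux 2: lambda_max bound
lemma smul_one_sub_psd {m : Type*} [Fintype m] [DecidableEq m]
    {M : Matrix m m ℝ} (hM : M.IsHermitian) :
    ((⨆ i, hM.eigenvalues i) • (1 : Matrix m m ℝ) - M).PosSemidef := by
  set c := ⨆ i, hM.eigenvalues i with hc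
  set U : Matrix m m ℝ := (hM.eigenvectorUnitary : Matrix m m ℝ) with hU
  have hUU : U * star U = 1 := Matrix.mem_unitaryGroup_iff.mp hM.eigenvectorUnitary.2
  have hdiag : (Matrix.diagonal fun i => c - hM.eigenvalues i).PosSemidef := by
    refine posSemidef_diagonal_iff.mpr fun i => sub_nonneg.mpr ?_
    exact le_ciSup (Set.finite_range _).bddAbove i
  have key : c • (1 : Matrix m m ℝ) - M
      = U * (Matrix.diagonal fun i => c - hM.eigenvalues i) * star U := by
    have hspec := hM.spectral_theorem
    rw [RCLike.ofReal_real_eq_id] at hspec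
    have hd : (Matrix.diagonal fun i => c - hM.eigenvalues i)
        = c • (1 : Matrix m m ℝ) - Matrix.diagonal hM.eigenvalues := by
      rw [smul_one_eq_diagonal, ← diagonal_sub]
    rw [hd, Matrix.mul_sub, Matrix.sub_mul]
    rw [mul_smul_comm, smul_mul_assoc, mul_one, hUU]
    congr 1
  rw [key, Matrix.star_eq_conjTranspose]
  exact hdiag.mul_mul_conjTranspose_same U

/-- identity and lower bound for `ΔV_k = −M_kᵀP_{k+1}⁻¹M_k + P_k⁻¹` in GF-RLS,
with `M_k = I − P_{k+1}φ̄ᵀφ̄` and `G_k = I + φ̄(P_k⁻¹ − F_k)⁻¹φ̄ᵀ`. -/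
theorem deltaV_identity_and_bound (n p : ℕ)
    (P Pn F : Matrix (Fin n) (Fin n) ℝ) (φ : Matrix (Fin p) (Fin n) ℝ)
    (hP : P.PosDef) (hPn : Pn.PosDef) (hFsymm : F.IsSymm) (hPF : (P⁻¹ - F).PosDef)
    (hupd : Pn⁻¹ = P⁻¹ - F + φᵀ * φ)
    (h1 : (φ * φᵀ).IsHermitian) (h2 : ((P⁻¹ - F)⁻¹).IsHermitian) :
    (-(1 - Pn * φᵀ * φ)ᵀ * Pn⁻¹ * (1 - Pn * φᵀ * φ) + P⁻¹
        = F + φᵀ * (1 + φ * (P⁻¹ - F)⁻¹ * φᵀ)⁻¹ * φ) ∧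
    ((-(1 - Pn * φᵀ * φ)ᵀ * Pn⁻¹ * (1 - Pn * φᵀ * φ) + P⁻¹
        - (F + (1 + (⨆ i, h1.eigenvalues i) * (⨆ i, h2.eigenvalues i))⁻¹
            • (φᵀ * φ))).PosSemidef) := by
  classical
  set A := P⁻¹ - F with hAdef
  set G := 1 + φ * A⁻¹ * φᵀ with hGdef
  -- basic invertibility facts
  have hAdet : IsUnit A.det := isUnit_iff_ne_zero.mpr hPF.det_pos.ne'
  have hPndet : IsUnit Pn.det := isUnit_iff_ne_zero.mpr hPn.det_pos.ne'
  have hAinv : (A⁻¹).PosDef := hPF.inv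
  have hGpsd : (φ * A⁻¹ * φᵀ).PosSemidef := by
    have := hAinv.posSemidef.mul_mul_conjTranspose_same φ
    rwa [conjTranspose_eq_transpose_of_trivial] at this
  have hGpd : G.PosDef := Matrix.PosDef.add_posSemidef Matrix.PosDef.one hGpsd
  have hGdet : IsUnit G.det := isUnit_iff_ne_zero.mpr hGpd.det_pos.ne'
  -- symmetry facts
  have hAt : Aᵀ = A := by
    have := hPF.isHermitian.eq
    rwa [conjTranspose_eq_transpose_of_trivial] at this
  have hPnt : Pnᵀ = Pn := by
    have := hPn.isHermitian.eq
    rwa [conjTranspose_eq_transpose_of_trivial] at this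
  -- key substitutions
  have hφφ : φᵀ * φ = Pn⁻¹ - A := by rw [hupd]; abel
  have hArw : A = Pn⁻¹ - φᵀ * φ := by rw [hupd]; abel
  -- G * (φ * Pn * A) = φ
  have hGX : G * (φ * Pn * A) = φ := by
    have e1 : φ * A⁻¹ * φᵀ * (φ * Pn * A) = φ - φ * Pn * A := by
      calc φ * A⁻¹ * φᵀ * (φ * Pn * A)
          = φ * A⁻¹ * ((φᵀ * φ) * Pn) * A := by
            simp only [Matrix.mul_assoc]
        _ = φ * A⁻¹ * ((Pn⁻¹ - A) * Pn) * A := by rw [hφφ]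
        _ = φ * A⁻¹ * (1 - A * Pn) * A := by
            rw [Matrix.sub_mul, Matrix.nonsing_inv_mul Pn hPndet]
        _ = φ * (A⁻¹ * A) - φ * (A⁻¹ * A) * (Pn * A) := by
            simp only [Matrix.mul_sub, Matrix.sub_mul, Matrix.mul_one, Matrix.mul_assoc]
        _ = φ - φ * Pn * A := by
            rw [Matrix.nonsing_inv_mul A hAdet]
            simp [Matrix.mul_assoc]
    rw [hGdef, Matrix.add_mul, Matrix.one_mul, e1]
    abel
  have hGinvφ : G⁻¹ * φ = φ * Pn * A := by
    conv_lhs => rw [← hGX]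
    rw [← Matrix.mul_assoc, Matrix.nonsing_inv_mul G hGdet, Matrix.one_mul]
  -- the core quantity
  have hcore : φᵀ * G⁻¹ * φ = φᵀ * φ - φᵀ * φ * Pn * (φᵀ * φ) := by
    calc φᵀ * G⁻¹ * φ = φᵀ * (G⁻¹ * φ) := by rw [Matrix.mul_assoc]
      _ = φᵀ * (φ * Pn * A) := by rw [hGinvφ]
      _ = (φᵀ * φ) * Pn * A := by simp only [Matrix.mul_assoc]
      _ = (φᵀ * φ) * Pn * (Pn⁻¹ - φᵀ * φ) := by rw [← hArw]
      _ = (φᵀ * φ) * (Pn * Pn⁻¹) - φᵀ * φ * Pn * (φᵀ * φ) := by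
          simp only [Matrix.mul_sub, Matrix.mul_assoc]
      _ = φᵀ * φ - φᵀ * φ * Pn * (φᵀ * φ) := by
          rw [Matrix.mul_nonsing_inv Pn hPndet, Matrix.mul_one]
  -- the identity
  have hid : -(1 - Pn * φᵀ * φ)ᵀ * Pn⁻¹ * (1 - Pn * φᵀ * φ) + P⁻¹
      = F + φᵀ * G⁻¹ * φ := by
    have ht : (1 - Pn * φᵀ * φ)ᵀ = 1 - φᵀ * φ * Pn := by
      simp [transpose_sub, transpose_mul, hPnt, Matrix.mul_assoc]
    have hPinv : P⁻¹ = A + F := by rw [hAdef]; abel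
    rw [ht, hcore, hPinv]
    have expand : (1 - φᵀ * φ * Pn) * Pn⁻¹ * (1 - Pn * φᵀ * φ)
        = Pn⁻¹ - φᵀ * φ - φᵀ * φ + φᵀ * φ * Pn * (φᵀ * φ) := by
      have c1 : φᵀ * φ * Pn * Pn⁻¹ = φᵀ * φ := by
        rw [Matrix.mul_assoc, Matrix.mul_nonsing_inv Pn hPndet, Matrix.mul_one]
      have c2 : Pn⁻¹ * (Pn * φᵀ * φ) = φᵀ * φ := by
        rw [← Matrix.mul_assoc, ← Matrix.mul_assoc, Matrix.nonsing_inv_mul Pn hPndet,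
          Matrix.one_mul]
      have c3 : φᵀ * φ * Pn * Pn⁻¹ * (Pn * φᵀ * φ) = φᵀ * φ * Pn * (φᵀ * φ) := by
        rw [c1]; simp only [Matrix.mul_assoc]
      have c4 : φᵀ * φ * (Pn * φᵀ * φ) = φᵀ * φ * Pn * (φᵀ * φ) := by
        simp only [Matrix.mul_assoc]
      simp only [Matrix.sub_mul, Matrix.mul_sub, Matrix.one_mul, Matrix.mul_one, c1, c2, c4]
      abel
    rw [neg_mul, neg_mul, expand, hupd]
    abel
  refine ⟨hid, ?_⟩
  -- the bound
  rw [hid]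
  set l1 := ⨆ i, h1.eigenvalues i with hl1
  set l2 := ⨆ i, h2.eigenvalues i with hl2
  set c := 1 + l1 * l2 with hcdef
  have hφφt : (φ * φᵀ).PosSemidef := by
    have := Matrix.posSemidef_self_mul_conjTranspose φ
    rwa [conjTranspose_eq_transpose_of_trivial] at this
  have hl1n : 0 ≤ l1 := Real.iSup_nonneg fun i => hφφt.eigenvalues_nonneg i
  have hl2n : 0 ≤ l2 := Real.iSup_nonneg fun i => hAinv.posSemidef.eigenvalues_nonneg i
  have hc0 : 0 < c := by
    have := mul_nonneg hl1n hl2n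
    rw [hcdef]; linarith
  have s1 : (l1 • (1 : Matrix (Fin p) (Fin p) ℝ) - φ * φᵀ).PosSemidef := smul_one_sub_psd h1
  have s2 : (l2 • (1 : Matrix (Fin n) (Fin n) ℝ) - A⁻¹).PosSemidef := smul_one_sub_psd h2
  have s3 : (l2 • (φ * φᵀ) - φ * A⁻¹ * φᵀ).PosSemidef := by
    have := s2.mul_mul_conjTranspose_same φ
    rw [conjTranspose_eq_transpose_of_trivial] at this
    convert this using 1
    simp only [Matrix.mul_sub, Matrix.sub_mul, Matrix.mul_smul, Matrix.smul_mul,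
      Matrix.mul_one]
  have s4 : ((l2 * l1) • (1 : Matrix (Fin p) (Fin p) ℝ) - l2 • (φ * φᵀ)).PosSemidef := by
    have := psd_smul s1 hl2n
    convert this using 1
    rw [smul_sub, smul_smul]
  have s5 : (c • (1 : Matrix (Fin p) (Fin p) ℝ) - G).PosSemidef := by
    have := s3.add s4
    convert this using 1
    rw [hcdef, hGdef, add_smul, one_smul, mul_comm l1 l2]
    abel
  -- square root trick
  obtain ⟨S, hSH, hSS⟩ : ∃ S : Matrix (Fin p) (Fin p) ℝ, Sᴴ = S ∧ S * S = G := by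
    open scoped MatrixOrder in
    exact ⟨CFC.sqrt G, (CFC.sqrt_nonneg G).posSemidef.1,
      CFC.sqrt_mul_sqrt_self G hGpd.posSemidef.nonneg⟩
  have s7 : (c • G - G * G).PosSemidef := by
    have := s5.conjTranspose_mul_mul_same S
    rw [hSH] at this
    convert this using 1
    rw [Matrix.mul_sub, Matrix.sub_mul]
    congr 1
    · rw [Matrix.mul_smul, Matrix.smul_mul, Matrix.mul_one, hSS]
    · rw [← hSS]; simp only [Matrix.mul_assoc]
  have cancel1 : ∀ (X : Matrix (Fin p) (Fin n) ℝ), G⁻¹ * (G * X) = X := fun X => by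
    rw [← Matrix.mul_assoc, Matrix.nonsing_inv_mul G hGdet, Matrix.one_mul]
  have cancel2 : ∀ (X : Matrix (Fin p) (Fin n) ℝ), G * (G⁻¹ * X) = X := fun X => by
    rw [← Matrix.mul_assoc, Matrix.mul_nonsing_inv G hGdet, Matrix.one_mul]
  have s8 : (c • (φᵀ * (G⁻¹ * φ)) - φᵀ * φ).PosSemidef := by
    have := s7.conjTranspose_mul_mul_same (G⁻¹ * φ)
    convert this using 1
    rw [conjTranspose_mul, conjTranspose_eq_transpose_of_trivial φ, hGpd.inv.isHermitian.eq]
    calc c • (φᵀ * (G⁻¹ * φ)) - φᵀ * φ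
        = c • (φᵀ * (G⁻¹ * (G * (G⁻¹ * φ))))
            - φᵀ * (G⁻¹ * (G * (G * (G⁻¹ * φ)))) := by
          simp only [cancel1, cancel2]
      _ = φᵀ * G⁻¹ * (c • G - G * G) * (G⁻¹ * φ) := by
          simp only [Matrix.mul_sub, Matrix.sub_mul, Matrix.mul_smul, Matrix.smul_mul,
            Matrix.mul_assoc]
  have hfin : F + φᵀ * G⁻¹ * φ - (F + c⁻¹ • (φᵀ * φ))
      = c⁻¹ • (c • (φᵀ * (G⁻¹ * φ)) - φᵀ * φ) := by
    rw [smul_sub, smul_smul, inv_mul_cancel₀ hc0.ne', one_smul]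
    simp only [Matrix.mul_assoc]
    abel
  rw [hfin]
  exact psd_smul s8 (inv_nonneg.mpr hc0.le)
end

section
/- Suppose y_k = φ_kθ for all k ≥ 0, F_k ⪰ 0 for all k ≥ 0, and there exists b ∈ (0,∞) with (P_k⁻¹ − F_k)⁻¹ ⪯ bI_n for all k ≥ 0. Then the equilibrium θ̃_k ≡ 0 of the GF-RLS error dynamics θ̃_{k+1} = (I_n − P_{k+1}φ_kᵀΓ_k⁻¹φ_k)θ̃_k is Lyapunov stable. -/
open Matrix

/-- Euclidean norm of a vector in `ℝⁿ`. -/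
noncomputable def vecEnorm {n : ℕ} (x : Fin n → ℝ) : ℝ := Real.sqrt (x ⬝ᵥ x)

namespace GFRLSAux

lemma psd_nonneg {n : ℕ} {M : Matrix (Fin n) (Fin n) ℝ} (hM : M.PosSemidef)
    (x : Fin n → ℝ) : 0 ≤ x ⬝ᵥ M *ᵥ x := by
  simpa using hM.dotProduct_mulVec_nonneg x

lemma dot_swap {n : ℕ} {M : Matrix (Fin n) (Fin n) ℝ} (hM : Mᵀ = M)
    (x y : Fin n → ℝ) : x ⬝ᵥ M *ᵥ y = y ⬝ᵥ M *ᵥ x := by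
  rw [Matrix.dotProduct_mulVec, ← Matrix.mulVec_transpose, hM, dotProduct_comm]

open scoped MatrixOrder in
set_option maxHeartbeats 1000000 in
/-- If `A` is positive definite and `b•1 - A⁻¹` is PSD, then `b⁻¹ ‖x‖² ≤ xᵀAx`. -/
lemma lower_bound {n : ℕ} {A : Matrix (Fin n) (Fin n) ℝ} (hA : A.PosDef)
    {b : ℝ} (hb : 0 < b) (h : (b • (1 : Matrix (Fin n) (Fin n) ℝ) - A⁻¹).PosSemidef)
    (x : Fin n → ℝ) : b⁻¹ * (x ⬝ᵥ x) ≤ x ⬝ᵥ A *ᵥ x := by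
  obtain ⟨S, hSpsd, hSS⟩ : ∃ S : Matrix (Fin n) (Fin n) ℝ, S.PosSemidef ∧ S * S = A :=
    ⟨CFC.sqrt A, (CFC.sqrt_nonneg A).posSemidef, CFC.sqrt_mul_sqrt_self A hA.posSemidef.nonneg⟩
  have hSH : Sᴴ = S := hSpsd.1
  have hdet : IsUnit S.det := by
    have hdA : (0 : ℝ) < A.det := hA.det_pos
    rw [← hSS, Matrix.det_mul] at hdA
    exact isUnit_iff_ne_zero.2 fun hz => by simp [hz] at hdA
  have hAinv : A⁻¹ = S⁻¹ * S⁻¹ := by rw [← hSS, Matrix.mul_inv_rev]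
  have key : (b • A - 1 : Matrix (Fin n) (Fin n) ℝ).PosSemidef := by
    have hcong := h.conjTranspose_mul_mul_same S
    rw [hSH] at hcong
    have he : S * (b • (1 : Matrix (Fin n) (Fin n) ℝ) - A⁻¹) * S
        = b • A - 1 := by
      rw [hAinv, Matrix.mul_sub, Matrix.sub_mul, Matrix.mul_smul, mul_one,
        Matrix.smul_mul, hSS]
      congr 1
      rw [← Matrix.mul_assoc, Matrix.mul_nonsing_inv _ hdet, Matrix.one_mul,
        Matrix.nonsing_inv_mul _ hdet]
    rwa [he] at hcong
  have h2 := psd_nonneg key x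
  rw [Matrix.sub_mulVec, dotProduct_sub, Matrix.smul_mulVec,
    dotProduct_smul, Matrix.one_mulVec] at h2
  have hx : x ⬝ᵥ x ≤ b * (x ⬝ᵥ A *ᵥ x) := by
    simpa [smul_eq_mul] using h2
  rw [inv_mul_le_iff₀ hb]
  linarith

lemma quad_upper {n : ℕ} (M : Matrix (Fin n) (Fin n) ℝ) (x : Fin n → ℝ) :
    x ⬝ᵥ M *ᵥ x ≤ (∑ i, ∑ j, |M i j|) * (vecEnorm x) ^ 2 := by
  have he_nonneg : 0 ≤ vecEnorm x := Real.sqrt_nonneg _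
  have habs : ∀ i, |x i| ≤ vecEnorm x := by
    intro i
    have h1 : x i ^ 2 ≤ x ⬝ᵥ x := by
      have := Finset.single_le_sum (f := fun j => x j * x j)
        (fun j _ => mul_self_nonneg (x j)) (Finset.mem_univ i)
      simpa [dotProduct, sq] using this
    calc |x i| = Real.sqrt (x i ^ 2) := (Real.sqrt_sq_eq_abs _).symm
      _ ≤ vecEnorm x := Real.sqrt_le_sqrt h1
  calc x ⬝ᵥ M *ᵥ x = ∑ i, ∑ j, x i * (M i j * x j) := by
        simp [dotProduct, Matrix.mulVec, Finset.mul_sum]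
    _ ≤ ∑ i, ∑ j, |M i j| * (vecEnorm x) ^ 2 := by
        refine Finset.sum_le_sum fun i _ => Finset.sum_le_sum fun j _ => ?_
        have h1 : x i * (M i j * x j) ≤ |x i| * (|M i j| * |x j|) := by
          calc x i * (M i j * x j) ≤ |x i * (M i j * x j)| := le_abs_self _
            _ = |x i| * (|M i j| * |x j|) := by rw [abs_mul, abs_mul]
        have h2 : |x i| * (|M i j| * |x j|) ≤ vecEnorm x * (|M i j| * vecEnorm x) :=
          mul_le_mul (habs i)
            (mul_le_mul_of_nonneg_left (habs j) (abs_nonneg _))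
            (by positivity) he_nonneg
        calc x i * (M i j * x j) ≤ vecEnorm x * (|M i j| * vecEnorm x) := h1.trans h2
          _ = |M i j| * vecEnorm x ^ 2 := by ring
    _ = (∑ i, ∑ j, |M i j|) * (vecEnorm x) ^ 2 := by
        rw [Finset.sum_mul]
        exact Finset.sum_congr rfl fun i _ => (Finset.sum_mul _ _ _).symm

end GFRLSAux

open GFRLSAux in
/-- under `F_k ⪰ 0` and `(P_k⁻¹ − F_k)⁻¹ ⪯ b I`, the zero equilibrium of the
GF-RLS error dynamics `θ̃_{k+1} = (I − P_{k+1}φ_kᵀΓ_k⁻¹φ_k)θ̃_k` is Lyapunov stable. -/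
theorem gfrls_error_lyapunov_stable (n p : ℕ)
    (Γ : ℕ → Matrix (Fin p) (Fin p) ℝ) (hΓ : ∀ k, (Γ k).PosDef)
    (φ : ℕ → Matrix (Fin p) (Fin n) ℝ)
    (F : ℕ → Matrix (Fin n) (Fin n) ℝ) (hFsymm : ∀ k, (F k).IsSymm)
    (P : ℕ → Matrix (Fin n) (Fin n) ℝ) (hP : ∀ k, (P k).PosDef)
    (hPF : ∀ k, ((P k)⁻¹ - F k).PosDef)
    (hupd : ∀ k, (P (k + 1))⁻¹ = (P k)⁻¹ - F k + (φ k)ᵀ * (Γ k)⁻¹ * φ k)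
    (hFpsd : ∀ k, (F k).PosSemidef)
    (b : ℝ) (hb : 0 < b)
    (hbd : ∀ k, (b • (1 : Matrix (Fin n) (Fin n) ℝ) - ((P k)⁻¹ - F k)⁻¹).PosSemidef) :
    ∀ ε > (0 : ℝ), ∀ k0 : ℕ, ∃ δ > (0 : ℝ), ∀ θt : ℕ → Fin n → ℝ,
      (∀ k ≥ k0, θt (k + 1) = (1 - P (k + 1) * (φ k)ᵀ * (Γ k)⁻¹ * φ k).mulVec (θt k)) →
      vecEnorm (θt k0) < δ → ∀ k ≥ k0, vecEnorm (θt k) < ε := by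
  intro ε hε k0
  have hCpos : (0:ℝ) < (∑ i, ∑ j, |((P k0)⁻¹) i j|) + 1 := by positivity
  set C : ℝ := (∑ i, ∑ j, |((P k0)⁻¹) i j|) + 1 with hC
  have hbC : 0 < b * C := mul_pos hb hCpos
  refine ⟨ε / Real.sqrt (b * C), div_pos hε (Real.sqrt_pos.2 hbC), ?_⟩
  intro θt hdyn hinit k hk
  -- symmetry facts
  have hQt : ∀ k, ((P k)⁻¹ - F k)ᵀ = (P k)⁻¹ - F k := by
    intro k
    have h1 : ((P k)⁻¹)ᵀ = (P k)⁻¹ := by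
      rw [← Matrix.conjTranspose_eq_transpose_of_trivial]
      exact (hP k).1.inv
    rw [Matrix.transpose_sub, h1, (hFsymm k).eq]
  -- PSD of φᵀΓ⁻¹φ
  have hApsd : ∀ k, ((φ k)ᵀ * (Γ k)⁻¹ * φ k).PosSemidef := by
    intro k
    have := ((hΓ k).inv.posSemidef).conjTranspose_mul_mul_same (φ k)
    rwa [Matrix.conjTranspose_eq_transpose_of_trivial] at this
  -- monotonicity of the Lyapunov function
  have hmono : ∀ m, k0 ≤ m →
      θt (m+1) ⬝ᵥ (P (m+1))⁻¹ *ᵥ θt (m+1) ≤ θt m ⬝ᵥ (P m)⁻¹ *ᵥ θt m := by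
    intro m hm
    have hdetP : IsUnit (P (m+1)).det := (Matrix.isUnit_iff_isUnit_det _).1 (hP (m+1)).isUnit
    have hMz : (P (m+1))⁻¹ *ᵥ θt (m+1) = ((P m)⁻¹ - F m) *ᵥ θt m := by
      rw [hdyn m hm, Matrix.mulVec_mulVec]
      have assoc : P (m + 1) * (φ m)ᵀ * (Γ m)⁻¹ * φ m
          = P (m + 1) * ((φ m)ᵀ * (Γ m)⁻¹ * φ m) := by
        simp only [Matrix.mul_assoc]
      rw [Matrix.mul_sub, Matrix.mul_one, assoc, ← Matrix.mul_assoc,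
        Matrix.nonsing_inv_mul _ hdetP, Matrix.one_mul, hupd m, add_sub_cancel_right]
    have hswap : θt m ⬝ᵥ ((P m)⁻¹ - F m) *ᵥ θt (m+1)
        = θt (m+1) ⬝ᵥ ((P m)⁻¹ - F m) *ᵥ θt m := dot_swap (hQt m) _ _
    have hPt : ((P m)⁻¹)ᵀ = (P m)⁻¹ := by
      rw [← Matrix.conjTranspose_eq_transpose_of_trivial]
      exact (hP m).1.inv
    have hswapP : θt m ⬝ᵥ (P m)⁻¹ *ᵥ θt (m+1)
        = θt (m+1) ⬝ᵥ (P m)⁻¹ *ᵥ θt m := dot_swap hPt _ _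
    have hswapF : θt m ⬝ᵥ (F m) *ᵥ θt (m+1)
        = θt (m+1) ⬝ᵥ (F m) *ᵥ θt m := dot_swap (hFsymm m).eq _ _
    have hsplit : θt (m+1) ⬝ᵥ ((P m)⁻¹ - F m) *ᵥ θt m
        = θt (m+1) ⬝ᵥ ((P m)⁻¹ - F m) *ᵥ θt (m+1)
          + θt (m+1) ⬝ᵥ ((φ m)ᵀ * (Γ m)⁻¹ * φ m) *ᵥ θt (m+1) := by
      rw [← hMz, hupd m, Matrix.add_mulVec, dotProduct_add]
    have hQdiff : 0 ≤ (θt m - θt (m+1)) ⬝ᵥ ((P m)⁻¹ - F m) *ᵥ (θt m - θt (m+1)) :=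
      psd_nonneg (hPF m).posSemidef _
    have hexp : (θt m - θt (m+1)) ⬝ᵥ ((P m)⁻¹ - F m) *ᵥ (θt m - θt (m+1))
        = θt m ⬝ᵥ ((P m)⁻¹ - F m) *ᵥ θt m
          - 2 * (θt (m+1) ⬝ᵥ ((P m)⁻¹ - F m) *ᵥ θt m)
          + θt (m+1) ⬝ᵥ ((P m)⁻¹ - F m) *ᵥ θt (m+1) := by
      simp only [Matrix.sub_mulVec, Matrix.mulVec_sub, dotProduct_sub,
        sub_dotProduct]
      linear_combination hswapF - hswapP
    have hAz : 0 ≤ θt (m+1) ⬝ᵥ ((φ m)ᵀ * (Γ m)⁻¹ * φ m) *ᵥ θt (m+1) :=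
      psd_nonneg (hApsd m) _
    have hF : 0 ≤ θt m ⬝ᵥ (F m) *ᵥ θt m := psd_nonneg (hFpsd m) _
    have hPm : θt m ⬝ᵥ ((P m)⁻¹ - F m) *ᵥ θt m
        = θt m ⬝ᵥ (P m)⁻¹ *ᵥ θt m - θt m ⬝ᵥ (F m) *ᵥ θt m := by
      rw [Matrix.sub_mulVec, dotProduct_sub]
    have hVs : θt (m+1) ⬝ᵥ (P (m+1))⁻¹ *ᵥ θt (m+1)
        = θt (m+1) ⬝ᵥ ((P m)⁻¹ - F m) *ᵥ θt m := by rw [hMz]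
    rw [hVs]
    linarith
  -- V k ≤ V k0
  have hVle : θt k ⬝ᵥ (P k)⁻¹ *ᵥ θt k ≤ θt k0 ⬝ᵥ (P k0)⁻¹ *ᵥ θt k0 := by
    induction k, hk using Nat.le_induction with
    | base => exact le_refl _
    | succ m hm ih => exact (hmono m hm).trans ih
  -- lower bound
  have hlow : b⁻¹ * (θt k ⬝ᵥ θt k) ≤ θt k ⬝ᵥ (P k)⁻¹ *ᵥ θt k := by
    have h1 := lower_bound (hPF k) hb (hbd k) (θt k)
    have h2 : 0 ≤ θt k ⬝ᵥ (F k) *ᵥ θt k := psd_nonneg (hFpsd k) _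
    have h3 : θt k ⬝ᵥ ((P k)⁻¹ - F k) *ᵥ θt k
        = θt k ⬝ᵥ (P k)⁻¹ *ᵥ θt k - θt k ⬝ᵥ (F k) *ᵥ θt k := by
      rw [Matrix.sub_mulVec, dotProduct_sub]
    linarith
  -- upper bound at k0
  have hup : θt k0 ⬝ᵥ (P k0)⁻¹ *ᵥ θt k0 ≤ C * (vecEnorm (θt k0)) ^ 2 := by
    have h1 := quad_upper ((P k0)⁻¹) (θt k0)
    have h2 : (0:ℝ) ≤ (vecEnorm (θt k0)) ^ 2 := sq_nonneg _
    nlinarith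
  -- conclude
  have hδ : (vecEnorm (θt k0)) ^ 2 < (ε / Real.sqrt (b * C)) ^ 2 :=
    pow_lt_pow_left₀ hinit (Real.sqrt_nonneg _) two_ne_zero
  have hsq : (ε / Real.sqrt (b * C)) ^ 2 = ε ^ 2 / (b * C) := by
    rw [div_pow, Real.sq_sqrt hbC.le]
  have hfin : θt k ⬝ᵥ θt k < ε ^ 2 := by
    have hlt : b⁻¹ * (θt k ⬝ᵥ θt k) < C * (ε ^ 2 / (b * C)) := by
      have h := mul_lt_mul_of_pos_left (hsq ▸ hδ) hCpos
      linarith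
    have hCne : C ≠ 0 := ne_of_gt hCpos
    have hbne : b ≠ 0 := ne_of_gt hb
    rw [show C * (ε ^ 2 / (b * C)) = b⁻¹ * ε ^ 2 by field_simp] at hlt
    exact (mul_lt_mul_iff_right₀ (inv_pos.2 hb)).1 hlt
  show Real.sqrt (θt k ⬝ᵥ θt k) < ε
  exact (Real.sqrt_lt' hε).2 hfin
end

section
/- Under the GF-RLS error dynamics θ̃_{k+1} = M_kθ̃_k with F_k ⪰ 0 and (P_k⁻¹−F_k)⁻¹ ⪯ bI_n for all k, the function V(k,θ̃) = θ̃ᵀP_k⁻¹θ̃ satisfies V(k+1, M_kθ̃) − V(k,θ̃) ≤ −θ̃ᵀF_kθ̃ ≤ 0 for all k ≥ 0 and θ̃ ∈ ℝ^n. -/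
open Matrix

lemma dot_phi {p n : ℕ} (φ : Matrix (Fin p) (Fin n) ℝ) (a c : Fin n → ℝ) :
    a ⬝ᵥ (φᵀ * φ) *ᵥ c = ∑ i, (φ *ᵥ a) i * (φ *ᵥ c) i := by
  rw [← mulVec_mulVec, dotProduct_mulVec, vecMul_transpose]
  rfl

lemma dot_phi_self_nonneg {p n : ℕ} (φ : Matrix (Fin p) (Fin n) ℝ) (a : Fin n → ℝ) :
    0 ≤ a ⬝ᵥ (φᵀ * φ) *ᵥ a := by
  rw [dot_phi]
  exact Finset.sum_nonneg fun i _ => mul_self_nonneg _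

lemma dot_cs {p n : ℕ} (φ : Matrix (Fin p) (Fin n) ℝ) (z v : Fin n → ℝ) :
    (z ⬝ᵥ (φᵀ * φ) *ᵥ v) ^ 2 ≤ (z ⬝ᵥ (φᵀ * φ) *ᵥ z) * (v ⬝ᵥ (φᵀ * φ) *ᵥ v) := by
  rw [dot_phi φ z v, dot_phi φ z z, dot_phi φ v v]
  have := Finset.sum_mul_sq_le_sq_mul_sq Finset.univ (φ *ᵥ z) (φ *ᵥ v)
  simpa [sq] using this

/-- the Lyapunov function `V(k,v) = vᵀP_k⁻¹v` decreases along the GF-RLS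
error dynamics: `V(k+1, M_kv) − V(k,v) ≤ −vᵀF_kv ≤ 0`. -/
theorem lyapunov_decrease (n p : ℕ)
    (φ : ℕ → Matrix (Fin p) (Fin n) ℝ)
    (F : ℕ → Matrix (Fin n) (Fin n) ℝ)
    (P : ℕ → Matrix (Fin n) (Fin n) ℝ) (hP : ∀ k, (P k).PosDef)
    (hPF : ∀ k, ((P k)⁻¹ - F k).PosDef)
    (hupd : ∀ k, (P (k + 1))⁻¹ = (P k)⁻¹ - F k + (φ k)ᵀ * φ k)
    (hFpsd : ∀ k, (F k).PosSemidef)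
    (b : ℝ) (hb : 0 < b)
    (hbd : ∀ k, (b • (1 : Matrix (Fin n) (Fin n) ℝ) - ((P k)⁻¹ - F k)⁻¹).PosSemidef) :
    ∀ (k : ℕ) (v : Fin n → ℝ),
      ((1 - P (k + 1) * (φ k)ᵀ * φ k).mulVec v) ⬝ᵥ
          ((P (k + 1))⁻¹).mulVec ((1 - P (k + 1) * (φ k)ᵀ * φ k).mulVec v)
        - v ⬝ᵥ ((P k)⁻¹).mulVec v
        ≤ -(v ⬝ᵥ (F k).mulVec v) ∧
      -(v ⬝ᵥ (F k).mulVec v) ≤ 0 := by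
  intro k v
  have hF0 : 0 ≤ v ⬝ᵥ (F k) *ᵥ v := by simpa using (hFpsd k).dotProduct_mulVec_nonneg v
  refine ⟨?_, by linarith⟩
  set A : Matrix (Fin n) (Fin n) ℝ := (φ k)ᵀ * φ k with hA
  set Q : Matrix (Fin n) (Fin n) ℝ := (P (k+1))⁻¹ with hQdef
  have hQ : Q.PosDef := (hP (k+1)).inv
  have hQA : Q - A = (P k)⁻¹ - F k := by
    rw [hQdef, hupd k, ← hA]; abel
  have hQsymm : Qᵀ = Q := hQ.isHermitian
  set u : Fin n → ℝ := A *ᵥ v with hu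
  set z : Fin n → ℝ := P (k+1) *ᵥ u with hz
  have hw : (1 - P (k + 1) * (φ k)ᵀ * φ k) *ᵥ v = v - z := by
    rw [hz, hu, hA, sub_mulVec, one_mulVec, mulVec_mulVec, Matrix.mul_assoc]
  have hQP : Q * P (k+1) = 1 :=
    nonsing_inv_mul _ (isUnit_iff_ne_zero.2 (hP (k+1)).det_pos.ne')
  have hQz : Q *ᵥ z = u := by
    rw [hz, mulVec_mulVec, hQP, one_mulVec]
  have hsymm : ∀ (M : Matrix (Fin n) (Fin n) ℝ), Mᵀ = M → ∀ (a c : Fin n → ℝ),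
      a ⬝ᵥ M *ᵥ c = c ⬝ᵥ M *ᵥ a := by
    intro M hm a c
    rw [dotProduct_mulVec, ← mulVec_transpose, hm, dotProduct_comm]
  have expand : (v - z) ⬝ᵥ Q *ᵥ (v - z) = v ⬝ᵥ Q *ᵥ v - 2 * (v ⬝ᵥ u) + z ⬝ᵥ u := by
    rw [mulVec_sub, hQz, dotProduct_sub, sub_dotProduct, sub_dotProduct,
      hsymm Q hQsymm z v, hQz]
    ring
  have hzu : z ⬝ᵥ u = z ⬝ᵥ Q *ᵥ z := by rw [hQz]
  have ht0 : 0 ≤ z ⬝ᵥ Q *ᵥ z := by simpa using hQ.posSemidef.dotProduct_mulVec_nonneg z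
  have hAz_le : z ⬝ᵥ A *ᵥ z ≤ z ⬝ᵥ Q *ᵥ z := by
    have hR := (hPF k).posSemidef.dotProduct_mulVec_nonneg z
    simp only [star_trivial, ← hQA, sub_mulVec, dotProduct_sub] at hR
    linarith
  have hAz0 : 0 ≤ z ⬝ᵥ A *ᵥ z := dot_phi_self_nonneg (φ k) z
  have hAv0 : 0 ≤ v ⬝ᵥ A *ᵥ v := dot_phi_self_nonneg (φ k) v
  have hcs : (z ⬝ᵥ A *ᵥ v) ^ 2 ≤ (z ⬝ᵥ A *ᵥ z) * (v ⬝ᵥ A *ᵥ v) := dot_cs (φ k) z v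
  have hkey : z ⬝ᵥ u ≤ v ⬝ᵥ u := by
    have hzAv : z ⬝ᵥ A *ᵥ v = z ⬝ᵥ Q *ᵥ z := by rw [← hu, ← hzu]
    have hvu : v ⬝ᵥ u = v ⬝ᵥ A *ᵥ v := rfl
    rw [hzu, hvu]
    rw [hzAv] at hcs
    nlinarith [hAz_le, ht0, hAv0]
  have hvQ : v ⬝ᵥ Q *ᵥ v = v ⬝ᵥ ((P k)⁻¹) *ᵥ v - v ⬝ᵥ (F k) *ᵥ v + v ⬝ᵥ u := by
    have hQeq : Q = ((P k)⁻¹ - F k) + A := by rw [hQdef, hupd k, ← hA]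
    rw [hQeq, add_mulVec, sub_mulVec, dotProduct_add, dotProduct_sub, hu]
  rw [hw, expand, hvQ]
  linarith
end
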